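/- arXiv:1803.11090 — 2 statements merged into one kernel-verified Lean document; each statement's English description precedes it below -/
import Mathlib

section
/- Blackwell-type theorem (derivative form): suppose F has density f, H(t) = ∫₀^t y^α f(y) dy, and t H'(t)/H(t) → θ with 0 ≤ θ < α as t → ∞. Then H(t) R'(t) / t^{α−1} → ((α−θ)/α)² (2α − θ) as t → ∞, where R'(t) = f(t)/(1−G(t))² + 2α H(t)²/(t^{2α+1}(1−G(t))³). -/
open MeasureTheory Real Filter Set

lemma gronwall_up {H : ℝ → ℝ} {c T : ℝ} (hc : 0 < c) (hT : 0 < T)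
    (hcont : ContinuousOn H (Ici T)) (hpos : 0 < H T)
    (hineq : ∀ s, T ≤ s → H s ≤ H T + c * ∫ y in T..s, H y / y) :
    ∀ s, T ≤ s → H s ≤ H T * (s / T) ^ c := by
  set ψ : ℝ → ℝ := fun s => H T * (s / T) ^ c with hψdef
  have hψcont : Continuous ψ := by
    apply continuous_const.mul
    apply Continuous.rpow_const (continuous_id.div_const T)
    intro x; exact Or.inr hc.le
  have hψint : ∀ s, T ≤ s → (∫ y in T..s, ψ y / y) = H T * ((s / T) ^ c - 1) / c := by
    intro s hs
    have h1 : EqOn (fun y => ψ y / y) (fun y => (H T / T ^ c) * y ^ (c - 1)) (uIcc T s) := by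
      intro y hy
      rw [uIcc_of_le hs] at hy
      have hy0 : 0 < y := lt_of_lt_of_le hT hy.1
      simp only [hψdef]
      rw [div_rpow (le_of_lt hy0) hT.le, rpow_sub_one hy0.ne']
      field_simp
    rw [intervalIntegral.integral_congr h1, intervalIntegral.integral_const_mul,
      integral_rpow (Or.inl (by linarith))]
    have hTc : (0:ℝ) < T ^ c := rpow_pos_of_pos hT c
    have hsc : (s / T) ^ c = s ^ c / T ^ c := div_rpow (le_trans hT.le hs) hT.le c
    rw [hsc]
    have h2 : c - 1 + 1 = c := by ring
    rw [h2]
    field_simp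
  have key : ∀ δ : ℝ, 0 < δ → ∀ s, T ≤ s → H s ≤ (1 + δ) * (H T * (s / T) ^ c) := by
    intro δ hδ
    by_contra hcon
    push_neg at hcon
    obtain ⟨s₁, hs₁T, hs₁⟩ := hcon
    set S : Set ℝ := Ici T ∩ {s | (1 + δ) * ψ s ≤ H s} with hSdef
    have hScl : IsClosed S := by
      have : S = Ici T ∩ (fun s => H s - (1 + δ) * ψ s) ⁻¹' (Ici 0) := by
        ext x; simp [hSdef, sub_nonneg]
      rw [this]
      exact ContinuousOn.preimage_isClosed_of_isClosed
        (hcont.sub (continuous_const.mul hψcont).continuousOn) isClosed_Ici isClosed_Ici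
    have hSne : S.Nonempty := ⟨s₁, hs₁T, hs₁.le⟩
    have hSbdd : BddBelow S := ⟨T, fun x hx => hx.1⟩
    set s₀ := sInf S with hs₀def
    have hs₀S : s₀ ∈ S := hScl.csInf_mem hSne hSbdd
    have hs₀T : T ≤ s₀ := hs₀S.1
    have hmono : ∀ y, y ∈ Ico T s₀ → H y ≤ (1 + δ) * ψ y := by
      intro y hy
      by_contra hcon2
      push_neg at hcon2
      have : y ∈ S := ⟨hy.1, hcon2.le⟩
      exact absurd (csInf_le hSbdd this) (not_le.2 hy.2)
    have hHint : IntervalIntegrable (fun y => H y / y) volume T s₀ := by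
      apply ContinuousOn.intervalIntegrable
      rw [uIcc_of_le hs₀T]
      apply ContinuousOn.div (hcont.mono (Icc_subset_Ici_self)) continuousOn_id
      intro y hy; exact (lt_of_lt_of_le hT hy.1).ne'
    have hψint' : IntervalIntegrable (fun y => (1 + δ) * ψ y / y) volume T s₀ := by
      apply ContinuousOn.intervalIntegrable
      rw [uIcc_of_le hs₀T]
      apply ContinuousOn.div (continuous_const.mul hψcont).continuousOn continuousOn_id
      intro y hy; exact (lt_of_lt_of_le hT hy.1).ne'
    have hae : (fun y => H y / y) ≤ᵐ[volume.restrict (Icc T s₀)] (fun y => (1 + δ) * ψ y / y) := by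
      have hne : ∀ᵐ (y : ℝ) ∂(volume.restrict (Icc T s₀)), y ≠ s₀ := by
        apply ae_restrict_of_ae
        rw [ae_iff]
        simp only [not_ne_iff, setOf_eq_eq_singleton]
        exact Real.volume_singleton
      filter_upwards [ae_restrict_mem measurableSet_Icc, hne] with y hy hyne
      have hy' : y ∈ Ico T s₀ := ⟨hy.1, lt_of_le_of_ne hy.2 hyne⟩
      have hy0 : 0 < y := lt_of_lt_of_le hT hy.1
      have hm := hmono y hy'
      gcongr
    have hintle : (∫ y in T..s₀, H y / y) ≤ ∫ y in T..s₀, (1 + δ) * ψ y / y :=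
      intervalIntegral.integral_mono_ae_restrict hs₀T hHint hψint' hae
    have hcalc : (∫ y in T..s₀, (1 + δ) * ψ y / y) = (1 + δ) * (H T * ((s₀ / T) ^ c - 1) / c) := by
      have h3 : (fun y => (1 + δ) * ψ y / y) = (fun y => (1 + δ) * (ψ y / y)) := by
        funext y; ring
      rw [h3, intervalIntegral.integral_const_mul, hψint s₀ hs₀T]
    have hup := hineq s₀ hs₀T
    have hlow := hs₀S.2
    have hstep : H s₀ ≤ H T + c * ((1 + δ) * (H T * ((s₀ / T) ^ c - 1) / c)) := by
      calc H s₀ ≤ H T + c * ∫ y in T..s₀, H y / y := hup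
        _ ≤ H T + c * ∫ y in T..s₀, (1 + δ) * ψ y / y := by nlinarith [hintle]
        _ = H T + c * ((1 + δ) * (H T * ((s₀ / T) ^ c - 1) / c)) := by rw [hcalc]
    have hexp : c * ((1 + δ) * (H T * ((s₀ / T) ^ c - 1) / c)) =
        (1 + δ) * (H T * ((s₀ / T) ^ c - 1)) := by field_simp
    rw [hexp] at hstep
    have hlow' : (1 + δ) * (H T * (s₀ / T) ^ c) ≤ H s₀ := hlow
    nlinarith [mul_pos hδ hpos, hstep, hlow']
  intro s hs
  have hX : 0 < H T * (s / T) ^ c :=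
    mul_pos hpos (rpow_pos_of_pos (div_pos (lt_of_lt_of_le hT hs) hT) c)
  apply le_of_forall_pos_le_add
  intro ε hε
  calc H s ≤ (1 + ε / (H T * (s / T) ^ c)) * (H T * (s / T) ^ c) :=
      key _ (div_pos hε hX) s hs
    _ = H T * (s / T) ^ c + ε := by
      rw [add_mul, one_mul, div_mul_cancel₀ _ hX.ne']

lemma gronwall_down {H : ℝ → ℝ} {c T : ℝ} (hc : 0 < c) (hT : 0 < T)
    (hcont : ContinuousOn H (Ici T)) (hpos : 0 < H T)
    (hineq : ∀ s, T ≤ s → H T + c * ∫ y in T..s, H y / y ≤ H s) :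
    ∀ s, T ≤ s → H T * (s / T) ^ c ≤ H s := by
  set ψ : ℝ → ℝ := fun s => H T * (s / T) ^ c with hψdef
  have hψcont : Continuous ψ := by
    apply continuous_const.mul
    apply Continuous.rpow_const (continuous_id.div_const T)
    intro x; exact Or.inr hc.le
  have hψint : ∀ s, T ≤ s → (∫ y in T..s, ψ y / y) = H T * ((s / T) ^ c - 1) / c := by
    intro s hs
    have h1 : EqOn (fun y => ψ y / y) (fun y => (H T / T ^ c) * y ^ (c - 1)) (uIcc T s) := by
      intro y hy
      rw [uIcc_of_le hs] at hy
      have hy0 : 0 < y := lt_of_lt_of_le hT hy.1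
      simp only [hψdef]
      rw [div_rpow (le_of_lt hy0) hT.le, rpow_sub_one hy0.ne']
      field_simp
    rw [intervalIntegral.integral_congr h1, intervalIntegral.integral_const_mul,
      integral_rpow (Or.inl (by linarith))]
    have hTc : (0:ℝ) < T ^ c := rpow_pos_of_pos hT c
    have hsc : (s / T) ^ c = s ^ c / T ^ c := div_rpow (le_trans hT.le hs) hT.le c
    rw [hsc]
    have h2 : c - 1 + 1 = c := by ring
    rw [h2]
    field_simp
  have key : ∀ δ : ℝ, 0 < δ → δ < 1 → ∀ s, T ≤ s → (1 - δ) * (H T * (s / T) ^ c) ≤ H s := by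
    intro δ hδ hδ1
    by_contra hcon
    push_neg at hcon
    obtain ⟨s₁, hs₁T, hs₁⟩ := hcon
    set S : Set ℝ := Ici T ∩ {s | H s ≤ (1 - δ) * ψ s} with hSdef
    have hScl : IsClosed S := by
      have : S = Ici T ∩ (fun s => (1 - δ) * ψ s - H s) ⁻¹' (Ici 0) := by
        ext x; simp [hSdef, sub_nonneg]
      rw [this]
      exact ContinuousOn.preimage_isClosed_of_isClosed
        (((continuous_const.mul hψcont).continuousOn).sub hcont) isClosed_Ici isClosed_Ici
    have hSne : S.Nonempty := ⟨s₁, hs₁T, hs₁.le⟩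
    have hSbdd : BddBelow S := ⟨T, fun x hx => hx.1⟩
    set s₀ := sInf S with hs₀def
    have hs₀S : s₀ ∈ S := hScl.csInf_mem hSne hSbdd
    have hs₀T : T ≤ s₀ := hs₀S.1
    have hmono : ∀ y, y ∈ Ico T s₀ → (1 - δ) * ψ y ≤ H y := by
      intro y hy
      by_contra hcon2
      push_neg at hcon2
      have : y ∈ S := ⟨hy.1, hcon2.le⟩
      exact absurd (csInf_le hSbdd this) (not_le.2 hy.2)
    have hHint : IntervalIntegrable (fun y => H y / y) volume T s₀ := by
      apply ContinuousOn.intervalIntegrable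
      rw [uIcc_of_le hs₀T]
      apply ContinuousOn.div (hcont.mono (Icc_subset_Ici_self)) continuousOn_id
      intro y hy; exact (lt_of_lt_of_le hT hy.1).ne'
    have hψint' : IntervalIntegrable (fun y => (1 - δ) * ψ y / y) volume T s₀ := by
      apply ContinuousOn.intervalIntegrable
      rw [uIcc_of_le hs₀T]
      apply ContinuousOn.div (continuous_const.mul hψcont).continuousOn continuousOn_id
      intro y hy; exact (lt_of_lt_of_le hT hy.1).ne'
    have hae : (fun y => (1 - δ) * ψ y / y) ≤ᵐ[volume.restrict (Icc T s₀)] (fun y => H y / y) := by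
      have hne : ∀ᵐ (y : ℝ) ∂(volume.restrict (Icc T s₀)), y ≠ s₀ := by
        apply ae_restrict_of_ae
        rw [ae_iff]
        simp only [not_ne_iff, setOf_eq_eq_singleton]
        exact Real.volume_singleton
      filter_upwards [ae_restrict_mem measurableSet_Icc, hne] with y hy hyne
      have hy' : y ∈ Ico T s₀ := ⟨hy.1, lt_of_le_of_ne hy.2 hyne⟩
      have hy0 : 0 < y := lt_of_lt_of_le hT hy.1
      have hm := hmono y hy'
      gcongr
    have hintle : (∫ y in T..s₀, (1 - δ) * ψ y / y) ≤ ∫ y in T..s₀, H y / y :=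
      intervalIntegral.integral_mono_ae_restrict hs₀T hψint' hHint hae
    have hcalc : (∫ y in T..s₀, (1 - δ) * ψ y / y) = (1 - δ) * (H T * ((s₀ / T) ^ c - 1) / c) := by
      have h3 : (fun y => (1 - δ) * ψ y / y) = (fun y => (1 - δ) * (ψ y / y)) := by
        funext y; ring
      rw [h3, intervalIntegral.integral_const_mul, hψint s₀ hs₀T]
    have hup := hineq s₀ hs₀T
    have hstep : H T + c * ((1 - δ) * (H T * ((s₀ / T) ^ c - 1) / c)) ≤ H s₀ := by
      calc H T + c * ((1 - δ) * (H T * ((s₀ / T) ^ c - 1) / c))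
          = H T + c * ∫ y in T..s₀, (1 - δ) * ψ y / y := by rw [hcalc]
        _ ≤ H T + c * ∫ y in T..s₀, H y / y := by nlinarith [hintle]
        _ ≤ H s₀ := hup
    have hexp : c * ((1 - δ) * (H T * ((s₀ / T) ^ c - 1) / c)) =
        (1 - δ) * (H T * ((s₀ / T) ^ c - 1)) := by field_simp
    rw [hexp] at hstep
    have hlow' : H s₀ ≤ (1 - δ) * (H T * (s₀ / T) ^ c) := hs₀S.2
    nlinarith [mul_pos hδ hpos, hstep, hlow']
  intro s hs
  have hX : 0 < H T * (s / T) ^ c :=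
    mul_pos hpos (rpow_pos_of_pos (div_pos (lt_of_lt_of_le hT hs) hT) c)
  apply le_of_forall_pos_le_add
  intro ε hε
  set δ := min (ε / (H T * (s / T) ^ c)) (1/2) with hδdef
  have hδ0 : 0 < δ := lt_min (div_pos hε hX) (by norm_num)
  have hδ1 : δ < 1 := lt_of_le_of_lt (min_le_right _ _) (by norm_num)
  have h := key δ hδ0 hδ1 s hs
  have hδε : δ * (H T * (s / T) ^ c) ≤ ε := by
    calc δ * (H T * (s / T) ^ c) ≤ (ε / (H T * (s / T) ^ c)) * (H T * (s / T) ^ c) := by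
          apply mul_le_mul_of_nonneg_right (min_le_left _ _) hX.le
      _ = ε := div_mul_cancel₀ _ hX.ne'
  nlinarith [h, hδε]

set_option maxHeartbeats 2000000 in
/-- Blackwell-type theorem, derivative form: if `F` has density `f`,
`H ∈ RV_θ` and `t H'(t)/H(t) → θ` with `0 ≤ θ < α`, then
`H(t) R'(t)/t^(α-1) → ((α-θ)/α)² (2α-θ)`. -/
theorem kendall_blackwell_derivative
    (α θ : ℝ) (hα : 0 < α) (hθ0 : 0 ≤ θ) (hθα : θ < α)
    (f : ℝ → ℝ) (hf0 : ∀ x, 0 ≤ f x) (hfneg : ∀ x ≤ 0, f x = 0)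
    (ν : Measure ℝ) (hν : ν = volume.withDensity (fun x => ENNReal.ofReal (f x)))
    [IsProbabilityMeasure ν]
    (F H G R' : ℝ → ℝ)
    (hF : ∀ t, F t = (ν (Set.Iic t)).toReal)
    (hH : ∀ t, H t = ∫ y in (0 : ℝ)..t, y ^ α * f y)
    (hG : ∀ t, G t = F t - t ^ (-α) * H t)
    (hR' : ∀ t, R' t = f t / (1 - G t) ^ 2 +
      2 * α * H t ^ 2 / (t ^ (2 * α + 1) * (1 - G t) ^ 3))
    (hRV : ∀ x : ℝ, 0 < x →
      Tendsto (fun t => H (t * x) / H t) atTop (nhds (x ^ θ)))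
    (hlim : Tendsto (fun t => t * (t ^ α * f t) / H t) atTop (nhds θ)) :
    Tendsto (fun t => H t * R' t / t ^ (α - 1)) atTop
      (nhds (((α - θ) / α) ^ 2 * (2 * α - θ))) := by
  set g : ℝ → ℝ := fun y => y ^ α * f y with hgdef
  by_cases hcase : ∀ t : ℝ, 0 < t → IntervalIntegrable g volume 0 t
  swap
  · -- degenerate case: H vanishes from some point on, contradicting hRV
    push_neg at hcase
    obtain ⟨t₀, ht₀, hni⟩ := hcase
    have hH0 : ∀ s, t₀ ≤ s → H s = 0 := by
      intro s hs
      rw [hH s]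
      apply intervalIntegral.integral_undef
      intro hint
      refine hni (hint.mono_set ?_)
      rw [uIcc_of_le ht₀.le, uIcc_of_le (ht₀.le.trans hs)]
      exact Icc_subset_Icc le_rfl hs
    have h1 := hRV 1 one_pos
    simp only [mul_one, Real.one_rpow] at h1
    have h0 : Tendsto (fun t : ℝ => H t / H t) atTop (nhds 0) := by
      apply Tendsto.congr' _ tendsto_const_nhds
      filter_upwards [eventually_ge_atTop t₀] with t ht
      rw [hH0 t ht, div_zero]
    exact absurd (tendsto_nhds_unique h0 h1) (by norm_num)
  -- main case
  have hg0 : ∀ y : ℝ, y ≤ 0 → g y = 0 := fun y hy => by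
    simp only [hgdef, hfneg y hy, mul_zero]
  have hgnn : ∀ y : ℝ, 0 ≤ y → 0 ≤ g y := fun y hy =>
    mul_nonneg (Real.rpow_nonneg hy α) (hf0 y)
  have hgneg : ∀ a : ℝ, a ≤ 0 → IntervalIntegrable g volume a 0 := by
    intro a ha
    rw [intervalIntegrable_iff]
    apply (integrableOn_congr_fun ?_ measurableSet_uIoc).mpr integrableOn_zero
    intro y hy
    rw [uIoc_of_le ha] at hy
    exact (hg0 y hy.2).symm ▸ rfl
  have hgint : ∀ a b : ℝ, IntervalIntegrable g volume a b := by
    have half : ∀ b : ℝ, IntervalIntegrable g volume 0 b := by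
      intro b
      rcases le_or_gt b 0 with hb | hb
      · exact (hgneg b hb).symm
      · exact hcase b hb
    intro a b
    exact (half a).symm.trans (half b)
  have Hcont : Continuous H := by
    have := intervalIntegral.continuous_primitive (fun a b => hgint a b) 0
    exact this.congr fun t => (hH t).symm
  have hHdiff : ∀ a b : ℝ, H b - H a = ∫ y in a..b, g y := by
    intro a b
    rw [hH a, hH b, ← intervalIntegral.integral_interval_sub_left (hgint 0 b) (hgint 0 a)]
  have hHmono : ∀ a b : ℝ, 0 ≤ a → a ≤ b → H a ≤ H b := by
    intro a b ha hab
    have h := hHdiff a b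
    have : 0 ≤ ∫ y in a..b, g y :=
      intervalIntegral.integral_nonneg hab (fun y hy => hgnn y (ha.trans hy.1))
    linarith
  -- H is eventually positive
  have hν1 : ν Set.univ = 1 := measure_univ
  have hνIic0 : ν (Set.Iic (0:ℝ)) = 0 := by
    rw [hν, withDensity_apply _ measurableSet_Iic]
    rw [setLIntegral_congr_fun measurableSet_Iic
      (fun x (hx : x ∈ Set.Iic (0:ℝ)) => by
        rw [hfneg x hx, ENNReal.ofReal_zero])]
    simp
  have hνIoi0 : ν (Set.Ioi (0:ℝ)) = 1 := by
    have := measure_add_measure_compl (μ := ν) (measurableSet_Iic (a := (0:ℝ)))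
    rw [Set.compl_Iic, hνIic0, zero_add, hν1] at this
    exact this
  have hνIoc : ∃ n : ℕ, ν (Set.Ioc (0:ℝ) n) ≠ 0 := by
    by_contra hcon
    push_neg at hcon
    have hun : Set.Ioi (0:ℝ) = ⋃ n : ℕ, Set.Ioc (0:ℝ) n := by
      ext x
      simp only [Set.mem_Ioi, Set.mem_iUnion, Set.mem_Ioc]
      constructor
      · intro hx
        obtain ⟨n, hn⟩ := exists_nat_ge x
        exact ⟨n, hx, hn⟩
      · rintro ⟨n, hn, -⟩; exact hn
    have : ν (Set.Ioi (0:ℝ)) = 0 := by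
      rw [hun]
      refine le_antisymm (le_trans (measure_iUnion_le _) ?_) zero_le
      simp [hcon]
    rw [hνIoi0] at this
    exact one_ne_zero this
  obtain ⟨n, hn⟩ := hνIoc
  have hνIocInt : ∀ t : ℝ, 0 < t → ν (Set.Ioc (0:ℝ) t) = ∫⁻ y in Set.Ioc (0:ℝ) t, ENNReal.ofReal (f y) := by
    intro t ht
    rw [hν, withDensity_apply _ measurableSet_Ioc]
  have hn0 : (0:ℝ) < n := by
    rcases Nat.eq_zero_or_pos n with h0 | h0
    · exfalso; apply hn; rw [h0]; simp
    · exact_mod_cast h0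
  have hHn : 0 < H n := by
    rcases lt_or_ge 0 (H n) with h | h
    · exact h
    have hHn0 : H n = 0 := le_antisymm h (by
      have := hHmono 0 n le_rfl hn0.le
      have h00 : H 0 = 0 := by rw [hH 0, intervalIntegral.integral_same]
      linarith)
    exfalso
    have hint : IntegrableOn g (Set.Ioc (0:ℝ) n) volume := by
      have := hgint 0 n
      rwa [intervalIntegrable_iff, uIoc_of_le hn0.le] at this
    have hHset : H n = ∫ y in Set.Ioc (0:ℝ) n, g y := by
      rw [hH n, intervalIntegral.integral_of_le hn0.le]
    have hgae : 0 ≤ᵐ[volume.restrict (Set.Ioc (0:ℝ) n)] g := by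
      filter_upwards [ae_restrict_mem measurableSet_Ioc] with y hy
      exact hgnn y hy.1.le
    have hg0' : g =ᵐ[volume.restrict (Set.Ioc (0:ℝ) n)] 0 := by
      rw [← MeasureTheory.integral_eq_zero_iff_of_nonneg_ae hgae hint]
      rw [← hHset]; exact hHn0
    have hf0' : (fun y => ENNReal.ofReal (f y)) =ᵐ[volume.restrict (Set.Ioc (0:ℝ) n)] 0 := by
      filter_upwards [hg0', ae_restrict_mem measurableSet_Ioc] with y hy hy'
      have hyα : (0:ℝ) < y ^ α := Real.rpow_pos_of_pos hy'.1 α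
      have : f y = 0 := by
        have := hy
        simp only [hgdef, Pi.zero_apply] at this
        rcases mul_eq_zero.mp this with h | h
        · exact absurd h hyα.ne'
        · exact h
      simp [this]
    apply hn
    rw [hνIocInt n hn0, lintegral_congr_ae hf0']
    simp
  -- positivity threshold
  set T₁ : ℝ := max (n:ℝ) 1 with hT₁def
  have hT₁pos : (0:ℝ) < T₁ := lt_of_lt_of_le one_pos (le_max_right _ _)
  have hHpos : ∀ t : ℝ, T₁ ≤ t → 0 < H t :=
    fun t ht => lt_of_lt_of_le hHn (hHmono n t hn0.le ((le_max_left _ _).trans ht))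
  -- measurability and integrability of f on tails
  have hun : Set.Ioi (0:ℝ) = ⋃ n : ℕ, Set.Ioc (0:ℝ) n := by
    ext x
    simp only [Set.mem_Ioi, Set.mem_iUnion, Set.mem_Ioc]
    constructor
    · intro hx
      obtain ⟨m, hm⟩ := exists_nat_ge x
      exact ⟨m, hx, hm⟩
    · rintro ⟨m, hm, -⟩; exact hm
  have hgm : ∀ m : ℕ, AEStronglyMeasurable g (volume.restrict (Set.Ioc (0:ℝ) m)) := by
    intro m
    rcases Nat.eq_zero_or_pos m with h0 | h0
    · subst h0
      simp only [Nat.cast_zero, Set.Ioc_self, Measure.restrict_empty]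
      exact aestronglyMeasurable_zero_measure g
    · have hm0 : (0:ℝ) < m := by exact_mod_cast h0
      have := hgint 0 m
      rw [intervalIntegrable_iff, uIoc_of_le hm0.le] at this
      exact this.aestronglyMeasurable
  have hfm0 : AEStronglyMeasurable f (volume.restrict (Set.Ioi (0:ℝ))) := by
    rw [hun, aestronglyMeasurable_iUnion_iff]
    intro m
    have h1 : AEStronglyMeasurable (fun y => y ^ (-α) * g y)
        (volume.restrict (Set.Ioc (0:ℝ) m)) := by
      refine AEStronglyMeasurable.mul ?_ (hgm m)
      exact (ContinuousOn.rpow_const continuousOn_id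
        (fun x hx => Or.inl (ne_of_gt hx.1))).aestronglyMeasurable measurableSet_Ioc
    apply h1.congr
    filter_upwards [ae_restrict_mem measurableSet_Ioc] with y hy
    simp only [hgdef]
    rw [← mul_assoc, ← Real.rpow_add hy.1]
    norm_num
  have hfmt : ∀ t : ℝ, 0 < t → AEStronglyMeasurable f (volume.restrict (Set.Ioi t)) :=
    fun t ht => hfm0.mono_measure (Measure.restrict_mono (Set.Ioi_subset_Ioi ht.le) le_rfl)
  have hfint : ∀ t : ℝ, 0 < t → IntegrableOn f (Set.Ioi t) volume := by
    intro t ht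
    refine ⟨hfmt t ht, ?_⟩
    rw [hasFiniteIntegral_iff_ofReal (ae_of_all _ hf0)]
    have heq : ∫⁻ y in Set.Ioi t, ENNReal.ofReal (f y) ∂volume = ν (Set.Ioi t) := by
      rw [hν, withDensity_apply _ measurableSet_Ioi]
    rw [heq]
    exact lt_of_le_of_lt (measure_mono (Set.subset_univ _)) (hν1 ▸ ENNReal.one_lt_top)
  have htail : ∀ t : ℝ, 0 < t → 1 - F t = ∫ y in Set.Ioi t, f y := by
    intro t ht
    have hcompl : ν (Set.Iic t) + ν (Set.Ioi t) = 1 := by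
      have := measure_add_measure_compl (μ := ν) (measurableSet_Iic (a := t))
      rwa [Set.compl_Iic, hν1] at this
    have hfin1 : ν (Set.Iic t) ≠ ⊤ := measure_ne_top ν _
    have hfin2 : ν (Set.Ioi t) ≠ ⊤ := measure_ne_top ν _
    have h2 : (ν (Set.Ioi t)).toReal = ∫ y in Set.Ioi t, f y := by
      rw [integral_eq_lintegral_of_nonneg_ae (ae_of_all _ hf0) (hfmt t ht)]
      congr 1
      rw [hν, withDensity_apply _ measurableSet_Ioi]
    have h3 := congrArg ENNReal.toReal hcompl
    rw [ENNReal.toReal_add hfin1 hfin2, ENNReal.toReal_one] at h3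
    rw [hF t, ← h2]
    linarith
  -- pointwise bounds from hlim
  have hbound : ∀ δ : ℝ, 0 < δ → ∃ T : ℝ, T₁ ≤ T ∧ ∀ y, T ≤ y →
      (θ - δ) * H y ≤ y * g y ∧ y * g y ≤ (θ + δ) * H y := by
    intro δ hδ
    obtain ⟨T0, hT0⟩ := Metric.tendsto_atTop.mp hlim δ hδ
    refine ⟨max T0 T₁, le_max_right _ _, fun y hy => ?_⟩
    have hyT0 : T0 ≤ y := (le_max_left _ _).trans hy
    have hyT₁ : T₁ ≤ y := (le_max_right _ _).trans hy
    have hHy : 0 < H y := hHpos y hyT₁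
    have hd := hT0 y hyT0
    rw [Real.dist_eq, abs_lt] at hd
    have hq : y * g y = (y * (y ^ α * f y) / H y) * H y := by
      rw [div_mul_cancel₀ _ hHy.ne']
    constructor
    · rw [hq]; nlinarith [hd.1, hHy]
    · rw [hq]; nlinarith [hd.2, hHy]
  -- Gronwall upper conclusion
  have hgronU : ∀ δ : ℝ, 0 < δ → ∃ T : ℝ, T₁ ≤ T ∧ ∀ t, T ≤ t → ∀ s, t ≤ s →
      H s ≤ H t * (s / t) ^ (θ + δ) := by
    intro δ hδ
    obtain ⟨T, hTT₁, hb⟩ := hbound δ hδ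
    refine ⟨T, hTT₁, fun t ht => ?_⟩
    have htpos : 0 < t := lt_of_lt_of_le hT₁pos (hTT₁.trans ht)
    refine gronwall_up (by linarith) htpos Hcont.continuousOn
      (hHpos t (hTT₁.trans ht)) ?_
    intro s' hs'
    have hdiff := hHdiff t s'
    have hmono2 : (∫ y in t..s', g y) ≤ (θ + δ) * ∫ y in t..s', H y / y := by
      rw [← intervalIntegral.integral_const_mul]
      apply intervalIntegral.integral_mono_on hs' (hgint t s')
      · apply ContinuousOn.intervalIntegrable
        rw [uIcc_of_le hs']
        apply ContinuousOn.mul continuousOn_const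
        apply ContinuousOn.div Hcont.continuousOn continuousOn_id
        intro y hy; exact (lt_of_lt_of_le htpos hy.1).ne'
      · intro y hy
        have hy0 : 0 < y := lt_of_lt_of_le htpos hy.1
        have := (hb y (ht.trans hy.1)).2
        rw [mul_div_assoc'] at *
        rw [le_div_iff₀ hy0]
        linarith [this]
    linarith
  -- Gronwall lower conclusion
  have hgronD : ∀ δ : ℝ, 0 < δ → δ < θ → ∃ T : ℝ, T₁ ≤ T ∧ ∀ t, T ≤ t → ∀ s, t ≤ s →
      H t * (s / t) ^ (θ - δ) ≤ H s := by
    intro δ hδ hδθ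
    obtain ⟨T, hTT₁, hb⟩ := hbound δ hδ
    refine ⟨T, hTT₁, fun t ht => ?_⟩
    have htpos : 0 < t := lt_of_lt_of_le hT₁pos (hTT₁.trans ht)
    refine gronwall_down (by linarith) htpos Hcont.continuousOn
      (hHpos t (hTT₁.trans ht)) ?_
    intro s' hs'
    have hdiff := hHdiff t s'
    have hmono2 : (θ - δ) * (∫ y in t..s', H y / y) ≤ ∫ y in t..s', g y := by
      rw [← intervalIntegral.integral_const_mul]
      apply intervalIntegral.integral_mono_on hs' ?_ (hgint t s')
      · intro y hy
        have hy0 : 0 < y := lt_of_lt_of_le htpos hy.1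
        have := (hb y (ht.trans hy.1)).1
        rw [mul_div_assoc']
        rw [div_le_iff₀ hy0]
        linarith [this]
      · apply ContinuousOn.intervalIntegrable
        rw [uIcc_of_le hs']
        apply ContinuousOn.mul continuousOn_const
        apply ContinuousOn.div Hcont.continuousOn continuousOn_id
        intro y hy; exact (lt_of_lt_of_le htpos hy.1).ne'
    linarith
  -- upper tail bound
  have htailU : ∀ δ : ℝ, 0 < δ → δ < α - θ → ∃ T : ℝ, T₁ ≤ T ∧ ∀ t, T ≤ t →
      t ^ α * (1 - F t) ≤ (θ + δ) / (α - θ - δ) * H t := by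
    intro δ hδ hδα
    obtain ⟨T, hTT₁, hb⟩ := hbound δ hδ
    obtain ⟨T', hTT₁', hg'⟩ := hgronU δ hδ
    refine ⟨max T T', (le_max_left _ _).trans' hTT₁, fun t ht => ?_⟩
    have htT : T ≤ t := (le_max_left _ _).trans ht
    have htT' : T' ≤ t := (le_max_right _ _).trans ht
    have htpos : 0 < t := lt_of_lt_of_le hT₁pos (hTT₁.trans htT)
    have hHt : 0 < H t := hHpos t (hTT₁.trans htT)
    set c : ℝ := θ + δ with hcdef
    have hc0 : 0 < c := by simp only [hcdef]; linarith
    have hcα : c < α := by simp only [hcdef]; linarith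
    have htc : (0:ℝ) < t ^ c := Real.rpow_pos_of_pos htpos c
    have hptw : ∀ y ∈ Set.Ioi t, f y ≤ (c * H t / t ^ c) * y ^ (c - α - 1) := by
      intro y hy
      have hy0 : 0 < y := htpos.trans hy
      have hyα1 : (0:ℝ) < y ^ (α + 1) := Real.rpow_pos_of_pos hy0 _
      have hyα : (0:ℝ) < y ^ α := Real.rpow_pos_of_pos hy0 _
      have hfy : f y = (y * g y) / y ^ (α + 1) := by
        simp only [hgdef]
        rw [Real.rpow_add_one hy0.ne']
        field_simp
      rw [hfy, div_le_iff₀ hyα1]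
      have h1 : y * g y ≤ c * H y := (hb y (htT.trans hy.le)).2
      have h2 : H y ≤ H t * (y / t) ^ c := hg' t htT' y hy.le
      have e1 : (y / t) ^ c = y ^ c / t ^ c := Real.div_rpow hy0.le htpos.le c
      have e2 : y ^ (c - α - 1) * y ^ (α + 1) = y ^ c := by
        rw [← Real.rpow_add hy0]; ring_nf
      calc y * g y ≤ c * H y := h1
        _ ≤ c * (H t * (y / t) ^ c) := by nlinarith [h2]
        _ = c * H t / t ^ c * (y ^ (c - α - 1) * y ^ (α + 1)) := by
            rw [e2, e1]; field_simp
        _ = c * H t / t ^ c * y ^ (c - α - 1) * y ^ (α + 1) := by ring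
    have hIint : IntegrableOn (fun y => (c * H t / t ^ c) * y ^ (c - α - 1))
        (Set.Ioi t) volume :=
      (integrableOn_Ioi_rpow_of_lt (by linarith) htpos).const_mul _
    have hmono3 : (∫ y in Set.Ioi t, f y) ≤
        ∫ y in Set.Ioi t, (c * H t / t ^ c) * y ^ (c - α - 1) :=
      setIntegral_mono_on (hfint t htpos) hIint measurableSet_Ioi hptw
    have hval : (∫ y in Set.Ioi t, (c * H t / t ^ c) * y ^ (c - α - 1))
        = (c * H t / t ^ c) * (-(t ^ (c - α)) / (c - α)) := by
      rw [MeasureTheory.integral_const_mul]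
      congr 1
      have := integral_Ioi_rpow_of_lt (a := c - α - 1) (by linarith) htpos
      rw [this]
      norm_num
    have e4 : t ^ α * t ^ (c - α) = t ^ c := by
      rw [← Real.rpow_add htpos]; ring_nf
    have e5 : t ^ α * ((c * H t / t ^ c) * (-(t ^ (c - α)) / (c - α)))
        = (θ + δ) / (α - θ - δ) * H t := by
      have h7 : -(t ^ (c - α)) / (c - α) = t ^ (c - α) / (α - c) := by
        rw [show α - c = -(c - α) by ring, div_neg, neg_div]
      rw [h7]
      have h8 : t ^ α * ((c * H t / t ^ c) * (t ^ (c - α) / (α - c)))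
          = (c * H t) * ((t ^ α * t ^ (c - α)) / t ^ c) / (α - c) := by ring
      rw [h8, e4, div_self htc.ne', mul_one]
      simp only [hcdef]
      ring
    calc t ^ α * (1 - F t) = t ^ α * ∫ y in Set.Ioi t, f y := by rw [htail t htpos]
      _ ≤ t ^ α * ((c * H t / t ^ c) * (-(t ^ (c - α)) / (c - α))) := by
          apply mul_le_mul_of_nonneg_left (hmono3.trans_eq hval)
            (Real.rpow_nonneg htpos.le α)
      _ = (θ + δ) / (α - θ - δ) * H t := e5
  -- lower tail bound
  have htailL : ∀ δ : ℝ, 0 < δ → δ < θ → ∃ T : ℝ, T₁ ≤ T ∧ ∀ t, T ≤ t →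
      (θ - δ) / (α - θ + δ) * H t ≤ t ^ α * (1 - F t) := by
    intro δ hδ hδθ
    obtain ⟨T, hTT₁, hb⟩ := hbound δ hδ
    obtain ⟨T', hTT₁', hg'⟩ := hgronD δ hδ hδθ
    refine ⟨max T T', (le_max_left _ _).trans' hTT₁, fun t ht => ?_⟩
    have htT : T ≤ t := (le_max_left _ _).trans ht
    have htT' : T' ≤ t := (le_max_right _ _).trans ht
    have htpos : 0 < t := lt_of_lt_of_le hT₁pos (hTT₁.trans htT)
    have hHt : 0 < H t := hHpos t (hTT₁.trans htT)
    set c : ℝ := θ - δ with hcdef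
    have hc0 : 0 < c := by simp only [hcdef]; linarith
    have hcα : c < α := by simp only [hcdef]; linarith
    have htc : (0:ℝ) < t ^ c := Real.rpow_pos_of_pos htpos c
    have hptw : ∀ y ∈ Set.Ioi t, (c * H t / t ^ c) * y ^ (c - α - 1) ≤ f y := by
      intro y hy
      have hy0 : 0 < y := htpos.trans hy
      have hyα1 : (0:ℝ) < y ^ (α + 1) := Real.rpow_pos_of_pos hy0 _
      have hfy : f y = (y * g y) / y ^ (α + 1) := by
        simp only [hgdef]
        rw [Real.rpow_add_one hy0.ne']
        field_simp
      rw [hfy, le_div_iff₀ hyα1]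
      have h1 : c * H y ≤ y * g y := (hb y (htT.trans hy.le)).1
      have h2 : H t * (y / t) ^ c ≤ H y := hg' t htT' y hy.le
      have e1 : (y / t) ^ c = y ^ c / t ^ c := Real.div_rpow hy0.le htpos.le c
      have e2 : y ^ (c - α - 1) * y ^ (α + 1) = y ^ c := by
        rw [← Real.rpow_add hy0]; ring_nf
      calc c * H t / t ^ c * y ^ (c - α - 1) * y ^ (α + 1)
          = c * H t / t ^ c * (y ^ (c - α - 1) * y ^ (α + 1)) := by ring
        _ = c * (H t * (y / t) ^ c) := by rw [e2, e1]; field_simp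
        _ ≤ c * H y := by nlinarith [h2]
        _ ≤ y * g y := h1
    have hIint : IntegrableOn (fun y => (c * H t / t ^ c) * y ^ (c - α - 1))
        (Set.Ioi t) volume :=
      (integrableOn_Ioi_rpow_of_lt (by linarith) htpos).const_mul _
    have hmono3 : (∫ y in Set.Ioi t, (c * H t / t ^ c) * y ^ (c - α - 1)) ≤
        ∫ y in Set.Ioi t, f y :=
      setIntegral_mono_on hIint (hfint t htpos) measurableSet_Ioi hptw
    have hval : (∫ y in Set.Ioi t, (c * H t / t ^ c) * y ^ (c - α - 1))
        = (c * H t / t ^ c) * (-(t ^ (c - α)) / (c - α)) := by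
      rw [MeasureTheory.integral_const_mul]
      congr 1
      have := integral_Ioi_rpow_of_lt (a := c - α - 1) (by linarith) htpos
      rw [this]
      norm_num
    have e4 : t ^ α * t ^ (c - α) = t ^ c := by
      rw [← Real.rpow_add htpos]; ring_nf
    have e5 : t ^ α * ((c * H t / t ^ c) * (-(t ^ (c - α)) / (c - α)))
        = (θ - δ) / (α - θ + δ) * H t := by
      have h7 : -(t ^ (c - α)) / (c - α) = t ^ (c - α) / (α - c) := by
        rw [show α - c = -(c - α) by ring, div_neg, neg_div]
      rw [h7]
      have h8 : t ^ α * ((c * H t / t ^ c) * (t ^ (c - α) / (α - c)))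
          = (c * H t) * ((t ^ α * t ^ (c - α)) / t ^ c) / (α - c) := by ring
      rw [h8, e4, div_self htc.ne', mul_one]
      simp only [hcdef]
      ring
    calc (θ - δ) / (α - θ + δ) * H t
        = t ^ α * ((c * H t / t ^ c) * (-(t ^ (c - α)) / (c - α))) := e5.symm
      _ ≤ t ^ α * ∫ y in Set.Ioi t, f y := by
          apply mul_le_mul_of_nonneg_left (hval.symm.trans_le hmono3)
            (Real.rpow_nonneg htpos.le α)
      _ = t ^ α * (1 - F t) := by rw [htail t htpos]
  -- the limit of A t = t^α (1-F t)/H t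
  set A : ℝ → ℝ := fun t => t ^ α * (1 - F t) / H t with hAdef
  have hAnn : ∀ᶠ t in atTop, 0 ≤ A t := by
    filter_upwards [eventually_ge_atTop T₁] with t ht
    have htpos : 0 < t := lt_of_lt_of_le hT₁pos ht
    have h1F : 0 ≤ 1 - F t := by
      rw [htail t htpos]
      exact setIntegral_nonneg measurableSet_Ioi (fun y _ => hf0 y)
    exact div_nonneg (mul_nonneg (Real.rpow_nonneg htpos.le α) h1F) (hHpos t ht).le
  have hαθ : (0:ℝ) < α - θ := by linarith
  have hA : Tendsto A atTop (nhds (θ / (α - θ))) := by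
    rw [tendsto_order]
    constructor
    · intro a ha
      rcases lt_or_ge a 0 with ha0 | ha0
      · filter_upwards [hAnn] with t ht; linarith
      · have hθpos : 0 < θ := by
          rcases lt_or_eq_of_le hθ0 with h | h
          · exact h
          · exfalso; rw [← h, zero_div] at ha; linarith
        have hcont : ContinuousAt (fun δ : ℝ => (θ - δ) / (α - θ + δ)) 0 := by
          apply ContinuousAt.div (by fun_prop) (by fun_prop)
          simpa using hαθ.ne'
        have hcval : Tendsto (fun δ : ℝ => (θ - δ) / (α - θ + δ)) (nhds 0)
            (nhds (θ / (α - θ))) := by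
          have := hcont.tendsto
          simpa using this
        have hev : ∀ᶠ δ in nhds (0:ℝ), a < (θ - δ) / (α - θ + δ) ∧ δ < θ :=
          (hcval.eventually_const_lt ha).and (eventually_lt_nhds hθpos)
        have hev' : ∀ᶠ δ in nhdsWithin (0:ℝ) (Set.Ioi 0),
            (a < (θ - δ) / (α - θ + δ) ∧ δ < θ) ∧ 0 < δ :=
          (hev.filter_mono nhdsWithin_le_nhds).and self_mem_nhdsWithin
        obtain ⟨δ, hδprop, hδpos⟩ := hev'.exists
        obtain ⟨T, hTT₁, hTl⟩ := htailL δ hδpos hδprop.2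
        filter_upwards [eventually_ge_atTop T] with t ht
        have hHt : 0 < H t := hHpos t (hTT₁.trans ht)
        have := hTl t ht
        calc a < (θ - δ) / (α - θ + δ) := hδprop.1
          _ ≤ A t := by rw [hAdef]; exact (le_div_iff₀ hHt).mpr this
    · intro b hb
      have hcont : ContinuousAt (fun δ : ℝ => (θ + δ) / (α - θ - δ)) 0 := by
        apply ContinuousAt.div (by fun_prop) (by fun_prop)
        simpa using hαθ.ne'
      have hcval : Tendsto (fun δ : ℝ => (θ + δ) / (α - θ - δ)) (nhds 0)
          (nhds (θ / (α - θ))) := by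
        have := hcont.tendsto
        simpa using this
      have hev : ∀ᶠ δ in nhds (0:ℝ), (θ + δ) / (α - θ - δ) < b ∧ δ < α - θ :=
        (hcval.eventually_lt_const hb).and (eventually_lt_nhds hαθ)
      have hev' : ∀ᶠ δ in nhdsWithin (0:ℝ) (Set.Ioi 0),
          ((θ + δ) / (α - θ - δ) < b ∧ δ < α - θ) ∧ 0 < δ :=
        (hev.filter_mono nhdsWithin_le_nhds).and self_mem_nhdsWithin
      obtain ⟨δ, hδprop, hδpos⟩ := hev'.exists
      obtain ⟨T, hTT₁, hTu⟩ := htailU δ hδpos hδprop.2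
      filter_upwards [eventually_ge_atTop T] with t ht
      have hHt : 0 < H t := hHpos t (hTT₁.trans ht)
      have := hTu t ht
      calc A t ≤ (θ + δ) / (α - θ - δ) := by
            rw [hAdef]; exact (div_le_iff₀ hHt).mpr this
        _ < b := hδprop.1
  -- structure of 1 - G
  have hGpos : ∀ᶠ t in atTop, 0 < t ∧ 0 < H t ∧ 0 < 1 - G t ∧
      t ^ α * (1 - G t) = t ^ α * (1 - F t) + H t := by
    filter_upwards [eventually_ge_atTop T₁] with t ht
    have htpos : 0 < t := lt_of_lt_of_le hT₁pos ht
    have hHt := hHpos t ht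
    have ha : (0:ℝ) < t ^ α := Real.rpow_pos_of_pos htpos α
    have hone : t ^ α * t ^ (-α) = 1 := by
      rw [← Real.rpow_add htpos]; simp
    have hsplit : t ^ α * (1 - G t) = t ^ α * (1 - F t) + H t := by
      rw [hG t]
      have expand : t ^ α * (1 - (F t - t ^ (-α) * H t))
          = t ^ α * (1 - F t) + (t ^ α * t ^ (-α)) * H t := by ring
      rw [expand, hone, one_mul]
    have h1F : 0 ≤ 1 - F t := by
      rw [htail t htpos]
      exact setIntegral_nonneg measurableSet_Ioi (fun y _ => hf0 y)
    have hGt : 0 < 1 - G t := by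
      have h2 : 0 < t ^ α * (1 - G t) := by rw [hsplit]; nlinarith
      by_contra hcon
      push_neg at hcon
      nlinarith
    exact ⟨htpos, hHt, hGt, hsplit⟩
  have hK : Tendsto (fun t => H t / (t ^ α * (1 - G t))) atTop (nhds ((α - θ) / α)) := by
    have hden : (0:ℝ) < θ / (α - θ) + 1 := by positivity
    have h1 : Tendsto (fun t => 1 / (A t + 1)) atTop (nhds (1 / (θ / (α - θ) + 1))) :=
      Tendsto.div tendsto_const_nhds (hA.add_const 1) hden.ne'
    have heq : (1 : ℝ) / (θ / (α - θ) + 1) = (α - θ) / α := by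
      rw [div_add' _ _ _ hαθ.ne', one_div_div]
      congr 1
      ring
    rw [heq] at h1
    apply h1.congr'
    filter_upwards [hGpos] with t ⟨htpos, hHt, hGt, hsplit⟩
    rw [hsplit, hAdef]
    rw [div_add_one hHt.ne', one_div_div]
  -- final identity and assembly
  have hfinal : ∀ᶠ t in atTop, H t * R' t / t ^ (α - 1) =
      (t * (t ^ α * f t) / H t) * (H t / (t ^ α * (1 - G t))) ^ 2
        + 2 * α * (H t / (t ^ α * (1 - G t))) ^ 3 := by
    filter_upwards [hGpos] with t ⟨htpos, hHt, hGt, hsplit⟩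
    rw [hR' t]
    have ha : (0:ℝ) < t ^ α := Real.rpow_pos_of_pos htpos α
    have e2α : t ^ (2 * α + 1) = t ^ α * t ^ α * t := by
      rw [show (2 * α + 1) = α + α + 1 by ring, Real.rpow_add htpos,
        Real.rpow_add htpos, Real.rpow_one]
    have eα1 : t ^ (α - 1) = t ^ α / t := by
      rw [show α - 1 = α + (-1) by ring, Real.rpow_add htpos, Real.rpow_neg_one,
        ← div_eq_mul_inv]
    rw [e2α, eα1]
    field_simp
  have hval2 : ((α - θ) / α) ^ 2 * (2 * α - θ)
      = θ * ((α - θ) / α) ^ 2 + 2 * α * ((α - θ) / α) ^ 3 := by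
    field_simp
    ring
  rw [hval2]
  have hRHS : Tendsto (fun t => (t * (t ^ α * f t) / H t) * (H t / (t ^ α * (1 - G t))) ^ 2
      + 2 * α * (H t / (t ^ α * (1 - G t))) ^ 3) atTop
      (nhds (θ * ((α - θ) / α) ^ 2 + 2 * α * ((α - θ) / α) ^ 3)) :=
    (hlim.mul (hK.pow 2)).add (tendsto_const_nhds.mul (hK.pow 3))
  exact hRHS.congr' (hfinal.mono fun _ h => h.symm)
end

section
/- Characteristic function of the Kendall renewal counting variable: for fixed t with G(t) < 1, the Fourier transform of N(t) satisfies E[e^{iuN(t)}] = 1 + (e^{iu} − 1)(F(t) − e^{iu}G(t)²)/(1 − e^{iu}G(t))². -/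
open MeasureTheory Real Filter Set

/-- Characteristic function of the Kendall renewal counting variable `N(t)`:
`E e^{iuN(t)} = 1 + (e^{iu}-1)(F(t) - e^{iu}G(t)²)/(1 - e^{iu}G(t))²`. -/
theorem kendall_renewal_charfun
    (Ft Gt : ℝ) (hG0 : 0 ≤ Gt) (hG1 : Gt < 1) (hGF : Gt ≤ Ft) (hF1 : Ft ≤ 1)
    (Fn : ℕ → ℝ) (hF0 : Fn 0 = 1)
    (hFn : ∀ n : ℕ, 1 ≤ n → Fn n = Gt ^ (n - 1) * (n * (Ft - Gt) + Gt))
    (p : ℕ → ℝ) (hp : ∀ n, p n = Fn n - Fn (n + 1)) (u : ℝ) :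
    ∑' n : ℕ, Complex.exp (Complex.I * u * n) * (p n : ℂ)
      = 1 + (Complex.exp (Complex.I * u) - 1) *
          ((Ft : ℂ) - Complex.exp (Complex.I * u) * (Gt : ℂ) ^ 2) /
          (1 - Complex.exp (Complex.I * u) * (Gt : ℂ)) ^ 2 := by
  set z : ℂ := Complex.exp (Complex.I * u) with hzdef
  set q : ℂ := z * (Gt : ℂ) with hqdef
  have hzn : ‖z‖ = 1 := by
    simp [hzdef, Complex.norm_exp]
  have hqn : ‖q‖ < 1 := by
    rw [hqdef, norm_mul, hzn, one_mul, Complex.norm_real, Real.norm_of_nonneg hG0]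
    exact hG1
  have h1q : (1 : ℂ) - q ≠ 0 := by
    intro h
    have hq1 : q = 1 := by linear_combination -h
    rw [hq1] at hqn
    simp at hqn
  -- rewrite the exponentials as powers of z
  have hf : ∀ n : ℕ, Complex.exp (Complex.I * u * n) = z ^ n := by
    intro n
    rw [hzdef, ← Complex.exp_nat_mul]
    ring_nf
  set A : ℂ := ((Ft : ℂ) - Gt) * (z - q) with hA
  set c : ℂ := z * (Ft : ℂ) - 2 * q * Ft + q * Gt with hc
  have key : ∀ m : ℕ, z ^ (m + 1) * ((p (m + 1) : ℝ) : ℂ)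
      = A * ((m : ℂ) * q ^ m) + c * q ^ m := by
    intro m
    rw [hp, hFn (m + 1) (by omega), hFn (m + 2) (by omega)]
    simp only [Nat.add_sub_cancel, show m + 2 - 1 = m + 1 from rfl]
    push_cast
    rw [hA, hqdef, hc, hqdef]
    ring
  have hs_m : Summable (fun m : ℕ => (m : ℂ) * q ^ m) :=
    (hasSum_coe_mul_geometric_of_norm_lt_one hqn).summable
  have hs_g : Summable (fun m : ℕ => q ^ m) := summable_geometric_of_norm_lt_one hqn
  have hs_tail : Summable (fun m : ℕ => z ^ (m + 1) * ((p (m + 1) : ℝ) : ℂ)) :=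
    (((hs_m.mul_left A).add (hs_g.mul_left c))).congr fun m => (key m).symm
  have hs : Summable (fun n : ℕ => z ^ n * ((p n : ℝ) : ℂ)) :=
    (summable_nat_add_iff 1).mp hs_tail
  have hp0 : p 0 = 1 - Ft := by
    rw [hp, hF0, hFn 1 le_rfl]
    norm_num
  calc ∑' n : ℕ, Complex.exp (Complex.I * u * n) * (p n : ℂ)
      = ∑' n : ℕ, z ^ n * ((p n : ℝ) : ℂ) := tsum_congr fun n => by rw [hf n]
    _ = z ^ 0 * ((p 0 : ℝ) : ℂ) + ∑' m : ℕ, z ^ (m + 1) * ((p (m + 1) : ℝ) : ℂ) :=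
        hs.tsum_eq_zero_add
    _ = z ^ 0 * ((p 0 : ℝ) : ℂ) + ∑' m : ℕ, (A * ((m : ℂ) * q ^ m) + c * q ^ m) := by
        rw [tsum_congr key]
    _ = z ^ 0 * ((p 0 : ℝ) : ℂ)
          + (A * ∑' m : ℕ, (m : ℂ) * q ^ m + c * ∑' m : ℕ, q ^ m) := by
        rw [Summable.tsum_add (hs_m.mul_left A) (hs_g.mul_left c), tsum_mul_left, tsum_mul_left]
    _ = z ^ 0 * ((p 0 : ℝ) : ℂ) + (A * (q / (1 - q) ^ 2) + c * (1 - q)⁻¹) := by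
        rw [tsum_coe_mul_geometric_of_norm_lt_one hqn, tsum_geometric_of_norm_lt_one hqn]
    _ = 1 + (z - 1) * ((Ft : ℂ) - z * (Gt : ℂ) ^ 2) / (1 - z * (Gt : ℂ)) ^ 2 := by
        have h1q' : (1 : ℂ) - z * Gt ≠ 0 := by rw [hqdef] at h1q; exact h1q
        rw [hp0, hA, hc, hqdef]
        push_cast
        have h2q' : (1 : ℂ) - Gt * z ≠ 0 := by rw [mul_comm]; exact h1q'
        field_simp
        ring
end
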